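/- Let 𝔥 be a nilpotent DGLA with 𝔥^i = 0 for i ≤ −2, and let γ ∈ MC(𝔥). Define a new bracket on 𝔥^{−1} by [a,b]_γ = [a, δb + [γ,b]]. Then (𝔥^{−1}, [·,·]_γ) is a Lie algebra: the bracket is antisymmetric and satisfies the Jacobi identity. -/
import Mathlib


/-- A (ℤ-graded) differential graded Lie algebra over ℚ: a family of ℚ-modules
`G i`, a degree-1 differential `d` with `d ∘ d = 0`, and a graded bracket
satisfying graded antisymmetry, the graded Leibniz rule and the graded Jacobi
identity. -/
structure DGLA where
  G : ℤ → Type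
  [grp : ∀ i, AddCommGroup (G i)]
  [mod : ∀ i, Module ℚ (G i)]
  d : ∀ i, G i →ₗ[ℚ] G (i + 1)
  bracket : ∀ i j, G i →ₗ[ℚ] G j →ₗ[ℚ] G (i + j)
  d_sq : ∀ i (x : G i), d (i + 1) (d i x) = 0
  antisymm : ∀ i j (x : G i) (y : G j),
    bracket i j x y
      = (-((-1 : ℚ) ^ (i * j))) • cast (congrArg G (add_comm j i)) (bracket j i y x)
  leibniz : ∀ i j (x : G i) (y : G j),
    d (i + j) (bracket i j x y)
      = cast (congrArg G (by ring : i + 1 + j = i + j + 1)) (bracket (i + 1) j (d i x) y)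
        + ((-1 : ℚ) ^ i) •
          cast (congrArg G (by ring : i + (j + 1) = i + j + 1)) (bracket i (j + 1) x (d j y))
  jacobi : ∀ i j k (x : G i) (y : G j) (z : G k),
    cast (congrArg G (by ring : i + (j + k) = i + j + k)) (bracket i (j + k) x (bracket j k y z))
      = bracket (i + j) k (bracket i j x y) z
        + ((-1 : ℚ) ^ (i * j)) •
          cast (congrArg G (by ring : j + (i + k) = i + j + k)) (bracket j (i + k) y (bracket i k x z))

attribute [instance] DGLA.grp DGLA.mod

/-- Transport along an equality of degrees. -/
def DGLA.cst (𝔤 : DGLA) {i j : ℤ} (h : i = j) (x : 𝔤.G i) : 𝔤.G j :=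
  cast (congrArg 𝔤.G h) x

/-- The curvature of a degree-1 element: `F(μ) = δμ + (1/2)[μ,μ]`. -/
def DGLA.curv (𝔤 : DGLA) (μ : 𝔤.G 1) : 𝔤.G 2 :=
  𝔤.d 1 μ + (1/2 : ℚ) • 𝔤.bracket 1 1 μ μ

/-- The bracket `[a,b]_γ = [a, δb + [γ,b]]` on `𝔥⁻¹` determined by a
Maurer-Cartan element `γ`. -/
def DGLA.gammaBracket (𝔥 : DGLA) (γ : 𝔥.G 1) (a b : 𝔥.G (-1)) : 𝔥.G (-1) :=
  𝔥.cst (by norm_num)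
    (𝔥.bracket (-1) 0 a
      (𝔥.cst (by norm_num) (𝔥.d (-1) b) + 𝔥.cst (by norm_num) (𝔥.bracket 1 (-1) γ b)))

namespace GammaAux

/-- `δb` in canonical degree 0. -/
def dm1 (𝔥 : DGLA) (b : 𝔥.G (-1)) : 𝔥.G 0 := 𝔥.d (-1) b
/-- `δx` in canonical degree 1. -/
def d0 (𝔥 : DGLA) (x : 𝔥.G 0) : 𝔥.G 1 := 𝔥.d 0 x
/-- `δγ` in canonical degree 2. -/
def d1 (𝔥 : DGLA) (x : 𝔥.G 1) : 𝔥.G 2 := 𝔥.d 1 x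

def B00 (𝔥 : DGLA) (x y : 𝔥.G 0) : 𝔥.G 0 := 𝔥.bracket 0 0 x y
def Bm10 (𝔥 : DGLA) (a : 𝔥.G (-1)) (x : 𝔥.G 0) : 𝔥.G (-1) := 𝔥.bracket (-1) 0 a x
def B0m1 (𝔥 : DGLA) (x : 𝔥.G 0) (a : 𝔥.G (-1)) : 𝔥.G (-1) := 𝔥.bracket 0 (-1) x a
def B1m1 (𝔥 : DGLA) (x : 𝔥.G 1) (a : 𝔥.G (-1)) : 𝔥.G 0 := 𝔥.bracket 1 (-1) x a
def Bm11 (𝔥 : DGLA) (a : 𝔥.G (-1)) (y : 𝔥.G 1) : 𝔥.G 0 := 𝔥.bracket (-1) 1 a y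
def B10 (𝔥 : DGLA) (x : 𝔥.G 1) (y : 𝔥.G 0) : 𝔥.G 1 := 𝔥.bracket 1 0 x y
def B2m1 (𝔥 : DGLA) (w : 𝔥.G 2) (a : 𝔥.G (-1)) : 𝔥.G 1 := 𝔥.bracket 2 (-1) w a
def B11 (𝔥 : DGLA) (x y : 𝔥.G 1) : 𝔥.G 2 := 𝔥.bracket 1 1 x y

/-- `δ_γ b = δb + [γ,b]` in degree 0. -/
def Dd (𝔥 : DGLA) (γ : 𝔥.G 1) (b : 𝔥.G (-1)) : 𝔥.G 0 := dm1 𝔥 b + B1m1 𝔥 γ b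

theorem gb_eq (𝔥 : DGLA) (γ : 𝔥.G 1) (a b : 𝔥.G (-1)) :
    𝔥.gammaBracket γ a b = Bm10 𝔥 a (Dd 𝔥 γ b) := rfl

end GammaAux
namespace GammaAux
variable (𝔥 : DGLA)

-- Retyped structural axioms at the concrete degrees we need.

theorem leib_m1m1 (a b : 𝔥.G (-1)) (hz : 𝔥.bracket (-1) (-1) a b = 0) :
    Bm10 𝔥 a (dm1 𝔥 b) = B0m1 𝔥 (dm1 𝔥 a) b := by
  have h : 𝔥.d (-1 + -1) (𝔥.bracket (-1) (-1) a b)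
      = B0m1 𝔥 (dm1 𝔥 a) b + ((-1 : ℚ) ^ ((-1 : ℤ))) • Bm10 𝔥 a (dm1 𝔥 b) :=
    𝔥.leibniz (-1) (-1) a b
  rw [hz, map_zero, show ((-1 : ℚ) ^ ((-1 : ℤ))) = -1 by norm_num, neg_one_smul] at h
  have := eq_neg_of_add_eq_zero_left h.symm
  rw [neg_neg] at this
  exact this.symm

theorem jac_1m1m1 (γ : 𝔥.G 1) (a b : 𝔥.G (-1)) (hz : 𝔥.bracket (-1) (-1) a b = 0) :
    Bm10 𝔥 a (B1m1 𝔥 γ b) = B0m1 𝔥 (B1m1 𝔥 γ a) b := by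
  have h : (𝔥.bracket 1 (-1 + -1) γ (𝔥.bracket (-1) (-1) a b) : 𝔥.G (-1))
      = B0m1 𝔥 (B1m1 𝔥 γ a) b + ((-1 : ℚ) ^ ((-1 : ℤ))) • Bm10 𝔥 a (B1m1 𝔥 γ b) :=
    𝔥.jacobi 1 (-1) (-1) γ a b
  rw [hz, map_zero, show ((-1 : ℚ) ^ ((-1 : ℤ))) = -1 by norm_num, neg_one_smul] at h
  have := eq_neg_of_add_eq_zero_left h.symm
  rw [neg_neg] at this
  exact this.symm

theorem anti_0m1 (x : 𝔥.G 0) (a : 𝔥.G (-1)) :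
    B0m1 𝔥 x a = - Bm10 𝔥 a x := by
  have h : B0m1 𝔥 x a = (-((-1 : ℚ) ^ ((0 : ℤ)))) • Bm10 𝔥 a x := 𝔥.antisymm 0 (-1) x a
  rw [h, show (-((-1 : ℚ) ^ ((0 : ℤ)))) = -1 by norm_num, neg_one_smul]

theorem leib_m10 (a : 𝔥.G (-1)) (x : 𝔥.G 0) :
    dm1 𝔥 (Bm10 𝔥 a x) = B00 𝔥 (dm1 𝔥 a) x - Bm11 𝔥 a (d0 𝔥 x) := by
  have h : dm1 𝔥 (Bm10 𝔥 a x)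
      = B00 𝔥 (dm1 𝔥 a) x + ((-1 : ℚ) ^ ((-1 : ℤ))) • Bm11 𝔥 a (d0 𝔥 x) :=
    𝔥.leibniz (-1) 0 a x
  rw [h, show ((-1 : ℚ) ^ ((-1 : ℤ))) = -1 by norm_num, neg_one_smul, sub_eq_add_neg]

theorem dsq_m1 (b : 𝔥.G (-1)) : d0 𝔥 (dm1 𝔥 b) = 0 := 𝔥.d_sq (-1) b

theorem leib_1m1 (γ : 𝔥.G 1) (b : 𝔥.G (-1)) :
    d0 𝔥 (B1m1 𝔥 γ b) = B2m1 𝔥 (d1 𝔥 γ) b - B10 𝔥 γ (dm1 𝔥 b) := by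
  have h : d0 𝔥 (B1m1 𝔥 γ b)
      = B2m1 𝔥 (d1 𝔥 γ) b + ((-1 : ℚ) ^ ((1 : ℤ))) • B10 𝔥 γ (dm1 𝔥 b) :=
    𝔥.leibniz 1 (-1) γ b
  rw [h, show ((-1 : ℚ) ^ ((1 : ℤ))) = -1 by norm_num, neg_one_smul, sub_eq_add_neg]

theorem jac_1m10 (γ : 𝔥.G 1) (a : 𝔥.G (-1)) (x : 𝔥.G 0) :
    B1m1 𝔥 γ (Bm10 𝔥 a x) = B00 𝔥 (B1m1 𝔥 γ a) x - Bm11 𝔥 a (B10 𝔥 γ x) := by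
  have h : B1m1 𝔥 γ (Bm10 𝔥 a x)
      = B00 𝔥 (B1m1 𝔥 γ a) x + ((-1 : ℚ) ^ ((-1 : ℤ))) • Bm11 𝔥 a (B10 𝔥 γ x) :=
    𝔥.jacobi 1 (-1) 0 γ a x
  rw [h, show ((-1 : ℚ) ^ ((-1 : ℤ))) = -1 by norm_num, neg_one_smul, sub_eq_add_neg]

theorem jac_11m1 (γ : 𝔥.G 1) (b : 𝔥.G (-1)) :
    B10 𝔥 γ (B1m1 𝔥 γ b) + B10 𝔥 γ (B1m1 𝔥 γ b) = B2m1 𝔥 (B11 𝔥 γ γ) b := by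
  have h : B10 𝔥 γ (B1m1 𝔥 γ b)
      = B2m1 𝔥 (B11 𝔥 γ γ) b + ((-1 : ℚ) ^ ((1 : ℤ))) • B10 𝔥 γ (B1m1 𝔥 γ b) :=
    𝔥.jacobi 1 1 (-1) γ γ b
  rw [show ((-1 : ℚ) ^ ((1 : ℤ))) = -1 by norm_num, neg_one_smul] at h
  nth_rewrite 1 [h]
  abel

theorem jac_00m1 (x y : 𝔥.G 0) (c : 𝔥.G (-1)) :
    B0m1 𝔥 (B00 𝔥 x y) c = B0m1 𝔥 x (B0m1 𝔥 y c) - B0m1 𝔥 y (B0m1 𝔥 x c) := by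
  have h : B0m1 𝔥 x (B0m1 𝔥 y c)
      = B0m1 𝔥 (B00 𝔥 x y) c + ((-1 : ℚ) ^ ((0 : ℤ))) • B0m1 𝔥 y (B0m1 𝔥 x c) :=
    𝔥.jacobi 0 0 (-1) x y c
  rw [show ((-1 : ℚ) ^ ((0 : ℤ))) = 1 by norm_num, one_smul] at h
  rw [h]; abel

end GammaAux
namespace GammaAux
variable (𝔥 : DGLA)

-- linearity helpers
theorem Bm10_add (a : 𝔥.G (-1)) (x y : 𝔥.G 0) :
    Bm10 𝔥 a (x + y) = Bm10 𝔥 a x + Bm10 𝔥 a y := map_add (𝔥.bracket (-1) 0 a) x y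

theorem B0m1_addl (x y : 𝔥.G 0) (a : 𝔥.G (-1)) :
    B0m1 𝔥 (x + y) a = B0m1 𝔥 x a + B0m1 𝔥 y a := by
  unfold B0m1; rw [map_add, LinearMap.add_apply]

theorem B00_addl (x y z : 𝔥.G 0) :
    B00 𝔥 (x + y) z = B00 𝔥 x z + B00 𝔥 y z := by
  unfold B00; rw [map_add, LinearMap.add_apply]

theorem Bm11_add (a : 𝔥.G (-1)) (x y : 𝔥.G 1) :
    Bm11 𝔥 a (x + y) = Bm11 𝔥 a x + Bm11 𝔥 a y := map_add (𝔥.bracket (-1) 1 a) x y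

theorem Bm11_zero (a : 𝔥.G (-1)) : Bm11 𝔥 a 0 = 0 := map_zero (𝔥.bracket (-1) 1 a)

theorem B10_add (γ : 𝔥.G 1) (x y : 𝔥.G 0) :
    B10 𝔥 γ (x + y) = B10 𝔥 γ x + B10 𝔥 γ y := map_add (𝔥.bracket 1 0 γ) x y

theorem B2m1_addl (x y : 𝔥.G 2) (a : 𝔥.G (-1)) :
    B2m1 𝔥 (x + y) a = B2m1 𝔥 x a + B2m1 𝔥 y a := by
  unfold B2m1; rw [map_add, LinearMap.add_apply]

theorem B2m1_smull (q : ℚ) (x : 𝔥.G 2) (a : 𝔥.G (-1)) :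
    B2m1 𝔥 (q • x) a = q • B2m1 𝔥 x a := by
  unfold B2m1; rw [map_smul, LinearMap.smul_apply]

theorem d0_add (x y : 𝔥.G 0) : d0 𝔥 (x + y) = d0 𝔥 x + d0 𝔥 y := map_add (𝔥.d 0) x y

theorem Dd_neg (γ : 𝔥.G 1) (b : 𝔥.G (-1)) : Dd 𝔥 γ (-b) = - Dd 𝔥 γ b := by
  unfold Dd dm1 B1m1
  rw [map_neg, map_neg, neg_add]

theorem gb_neg_right (γ : 𝔥.G 1) (a b : 𝔥.G (-1)) :
    𝔥.gammaBracket γ a (-b) = - 𝔥.gammaBracket γ a b := by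
  rw [gb_eq, gb_eq, Dd_neg]
  exact map_neg (𝔥.bracket (-1) 0 a) _

-- the swap identity  [a, δ_γ b] = [δ_γ a, b]
theorem swap (hvanish : ∀ i : ℤ, i ≤ -2 → ∀ x : 𝔥.G i, x = 0) (γ : 𝔥.G 1) (a b : 𝔥.G (-1)) :
    𝔥.gammaBracket γ a b = B0m1 𝔥 (Dd 𝔥 γ a) b := by
  have hz : 𝔥.bracket (-1) (-1) a b = 0 := hvanish (-1 + -1) (by norm_num) _
  rw [gb_eq]
  show Bm10 𝔥 a (dm1 𝔥 b + B1m1 𝔥 γ b) = _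
  rw [Bm10_add, leib_m1m1 𝔥 a b hz, jac_1m1m1 𝔥 γ a b hz]
  show _ = B0m1 𝔥 (dm1 𝔥 a + B1m1 𝔥 γ a) b
  rw [B0m1_addl]

theorem anti (hvanish : ∀ i : ℤ, i ≤ -2 → ∀ x : 𝔥.G i, x = 0) (γ : 𝔥.G 1) (a b : 𝔥.G (-1)) :
    𝔥.gammaBracket γ a b = - 𝔥.gammaBracket γ b a := by
  rw [swap 𝔥 hvanish γ a b, anti_0m1, gb_eq]

-- key: δ_γ [a,b]_γ = [δ_γ a, δ_γ b]
theorem keyB (hvanish : ∀ i : ℤ, i ≤ -2 → ∀ x : 𝔥.G i, x = 0)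
    (γ : 𝔥.G 1) (hγ : 𝔥.curv γ = 0) (a b : 𝔥.G (-1)) :
    Dd 𝔥 γ (𝔥.gammaBracket γ a b) = B00 𝔥 (Dd 𝔥 γ a) (Dd 𝔥 γ b) := by
  have hzero : d0 𝔥 (Dd 𝔥 γ b) + B10 𝔥 γ (Dd 𝔥 γ b) = 0 := by
    have hc : d1 𝔥 γ + (1/2 : ℚ) • B11 𝔥 γ γ = 0 := hγ
    have hc2 : B2m1 𝔥 (d1 𝔥 γ + (1/2 : ℚ) • B11 𝔥 γ γ) b = 0 := by rw [hc]; unfold B2m1; rw [map_zero, LinearMap.zero_apply]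
    rw [B2m1_addl, B2m1_smull] at hc2
    have hT := jac_11m1 𝔥 γ b
    show d0 𝔥 (dm1 𝔥 b + B1m1 𝔥 γ b) + B10 𝔥 γ (dm1 𝔥 b + B1m1 𝔥 γ b) = 0
    rw [d0_add, dsq_m1, leib_1m1, B10_add]
    rw [← hT, smul_add, show (1/2 : ℚ) • B10 𝔥 γ (B1m1 𝔥 γ b) + (1/2 : ℚ) • B10 𝔥 γ (B1m1 𝔥 γ b)
        = B10 𝔥 γ (B1m1 𝔥 γ b) from by rw [← add_smul]; norm_num] at hc2
    calc 0 + (B2m1 𝔥 (d1 𝔥 γ) b - B10 𝔥 γ (dm1 𝔥 b))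
          + (B10 𝔥 γ (dm1 𝔥 b) + B10 𝔥 γ (B1m1 𝔥 γ b))
        = B2m1 𝔥 (d1 𝔥 γ) b + B10 𝔥 γ (B1m1 𝔥 γ b) := by abel
      _ = 0 := hc2
  show dm1 𝔥 (𝔥.gammaBracket γ a b) + B1m1 𝔥 γ (𝔥.gammaBracket γ a b) = _
  rw [gb_eq, leib_m10, jac_1m10]
  rw [show B00 𝔥 (Dd 𝔥 γ a) (Dd 𝔥 γ b)
      = B00 𝔥 (dm1 𝔥 a) (Dd 𝔥 γ b) + B00 𝔥 (B1m1 𝔥 γ a) (Dd 𝔥 γ b) from B00_addl ..]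
  have : Bm11 𝔥 a (d0 𝔥 (Dd 𝔥 γ b)) + Bm11 𝔥 a (B10 𝔥 γ (Dd 𝔥 γ b)) = 0 := by
    rw [← Bm11_add, hzero, Bm11_zero]
  rw [sub_eq_add_neg, sub_eq_add_neg]
  have goal' : B00 𝔥 (dm1 𝔥 a) (Dd 𝔥 γ b) + -Bm11 𝔥 a (d0 𝔥 (Dd 𝔥 γ b))
      + (B00 𝔥 (B1m1 𝔥 γ a) (Dd 𝔥 γ b) + -Bm11 𝔥 a (B10 𝔥 γ (Dd 𝔥 γ b)))
      = B00 𝔥 (dm1 𝔥 a) (Dd 𝔥 γ b) + B00 𝔥 (B1m1 𝔥 γ a) (Dd 𝔥 γ b)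
      - (Bm11 𝔥 a (d0 𝔥 (Dd 𝔥 γ b)) + Bm11 𝔥 a (B10 𝔥 γ (Dd 𝔥 γ b))) := by abel
  rw [goal', this, sub_zero]

-- derived Leibniz identity for the new bracket
theorem leib (hvanish : ∀ i : ℤ, i ≤ -2 → ∀ x : 𝔥.G i, x = 0)
    (γ : 𝔥.G 1) (hγ : 𝔥.curv γ = 0) (a b c : 𝔥.G (-1)) :
    𝔥.gammaBracket γ (𝔥.gammaBracket γ a b) c
      = 𝔥.gammaBracket γ a (𝔥.gammaBracket γ b c)
        - 𝔥.gammaBracket γ b (𝔥.gammaBracket γ a c) := by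
  rw [swap 𝔥 hvanish γ (𝔥.gammaBracket γ a b) c, keyB 𝔥 hvanish γ hγ a b, jac_00m1,
    ← swap 𝔥 hvanish γ b c, ← swap 𝔥 hvanish γ a c,
    ← swap 𝔥 hvanish γ a (𝔥.gammaBracket γ b c), ← swap 𝔥 hvanish γ b (𝔥.gammaBracket γ a c)]

end GammaAux

/-- **The Getzler bracket on `𝔥⁻¹` is a Lie bracket.** Let `𝔥` be a DGLA with
`𝔥^i = 0` for `i ≤ −2`, and let `γ ∈ MC(𝔥)`.  Then
`[a,b]_γ = [a, δb + [γ,b]]` is antisymmetric and satisfies the Jacobi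
identity, so `(𝔥⁻¹, [·,·]_γ)` is a Lie algebra. -/
theorem gammaBracket_is_lie (𝔥 : DGLA)
    (hvanish : ∀ i : ℤ, i ≤ -2 → ∀ x : 𝔥.G i, x = 0)
    (γ : 𝔥.G 1) (hγ : 𝔥.curv γ = 0) :
    (∀ a b : 𝔥.G (-1), 𝔥.gammaBracket γ a b = - 𝔥.gammaBracket γ b a) ∧
    (∀ a b c : 𝔥.G (-1),
      𝔥.gammaBracket γ (𝔥.gammaBracket γ a b) c
        + 𝔥.gammaBracket γ (𝔥.gammaBracket γ b c) a
        + 𝔥.gammaBracket γ (𝔥.gammaBracket γ c a) b = 0) := by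
  have hanti := GammaAux.anti 𝔥 hvanish γ
  have hleib := GammaAux.leib 𝔥 hvanish γ hγ
  refine ⟨hanti, fun a b c => ?_⟩
  have key : 𝔥.gammaBracket γ a (𝔥.gammaBracket γ b c)
      - 𝔥.gammaBracket γ b (𝔥.gammaBracket γ a c)
      + 𝔥.gammaBracket γ c (𝔥.gammaBracket γ a b) = 0 := by
    rw [← hleib a b c, hanti c (𝔥.gammaBracket γ a b)]
    abel
  rw [hleib a b c, hleib b c a, hleib c a b,
    hanti c a, hanti b a, hanti c b,
    GammaAux.gb_neg_right, GammaAux.gb_neg_right, GammaAux.gb_neg_right]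
  calc 𝔥.gammaBracket γ a (𝔥.gammaBracket γ b c)
        - 𝔥.gammaBracket γ b (𝔥.gammaBracket γ a c)
      + (-𝔥.gammaBracket γ b (𝔥.gammaBracket γ a c)
        - -𝔥.gammaBracket γ c (𝔥.gammaBracket γ a b))
      + (𝔥.gammaBracket γ c (𝔥.gammaBracket γ a b)
        - -𝔥.gammaBracket γ a (𝔥.gammaBracket γ b c))
      = (𝔥.gammaBracket γ a (𝔥.gammaBracket γ b c)
          - 𝔥.gammaBracket γ b (𝔥.gammaBracket γ a c)
          + 𝔥.gammaBracket γ c (𝔥.gammaBracket γ a b))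
        + (𝔥.gammaBracket γ a (𝔥.gammaBracket γ b c)
          - 𝔥.gammaBracket γ b (𝔥.gammaBracket γ a c)
          + 𝔥.gammaBracket γ c (𝔥.gammaBracket γ a b)) := by abel
    _ = 0 := by rw [key]; abel
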